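/- In the binary peer-prediction model with break-even point q*: (a) if q01 ≤ q* ≤ q00, then the nine symmetric profiles given by the strategies (0,0), (1,1), (0,1), (1,0), (0, q*/q11), ((q*−q10)/q00, 1), (q*/q00, 0), (1, (q*−q01)/q11) and (q*, q*) are all equilibria; (b) if q00 < q*, then the seven symmetric profiles given by (0,0), (1,1), (0,1), (0, q*/q11), ((q*−q10)/q00, 1), (1, (q*−q01)/q11) and (q*, q*) are all equilibria; (c) if q* < q01, then the seven symmetric profiles given by (0,0), (1,1), (0,1), (0, q*/q11), ((q*−q10)/q00, 1), (q*/q00, 0) and (q*, q*) are all equilibria. -/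

import Mathlib

open Finset

noncomputable section

/-- A real function is affine. -/
def IsAffineFn (f : ℝ → ℝ) : Prop := ∃ a b : ℝ, ∀ x, f x = a * x + b

/-- A (mixed) strategy `s = (θ(1|0), θ(1|1))` is valid if both coordinates lie in `[0,1]`. -/
def ValidStrat (s : ℝ × ℝ) : Prop := s.1 ∈ Set.Icc (0 : ℝ) 1 ∧ s.2 ∈ Set.Icc (0 : ℝ) 1

/-- Induced report probability `q̂(1|0) = θ(1|0)·q00 + θ(1|1)·q10`, where `q00 = 1 - q10`. -/
def qhat0 (q10 : ℝ) (s : ℝ × ℝ) : ℝ := s.1 * (1 - q10) + s.2 * q10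

/-- Induced report probability `q̂(1|1) = θ(1|0)·q01 + θ(1|1)·q11`, where `q01 = 1 - q11`. -/
def qhat1 (q11 : ℝ) (s : ℝ × ℝ) : ℝ := s.1 * (1 - q11) + s.2 * q11

/-- Expected payoff of agent `i` under profile `θ`, where `ℓ0 = ℓ(·,0)` and `ℓ1 = ℓ(·,1)`
are the two payoff functions of the mechanism,
`q1 = q10/(1 - q11 + q10)` is the marginal probability of signal `1` and `q0 = 1 - q1`:
`ν_i(θ) = Σ_{b∈{0,1}} q_b·[(1−θ_i(1|b))·(1/(n−1))Σ_{j≠i} ℓ(q̂_j(1|b),0)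
                           + θ_i(1|b)·(1/(n−1))Σ_{j≠i} ℓ(q̂_j(1|b),1)]`. -/
def payoff (n : ℕ) (q10 q11 : ℝ) (ℓ0 ℓ1 : ℝ → ℝ) (θ : Fin n → ℝ × ℝ) (i : Fin n) : ℝ :=
  (1 - q10 / (1 - q11 + q10)) *
      ((1 - (θ i).1) * (((n : ℝ) - 1)⁻¹ * ∑ j ∈ univ.erase i, ℓ0 (qhat0 q10 (θ j)))
        + (θ i).1 * (((n : ℝ) - 1)⁻¹ * ∑ j ∈ univ.erase i, ℓ1 (qhat0 q10 (θ j))))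
    + (q10 / (1 - q11 + q10)) *
      ((1 - (θ i).2) * (((n : ℝ) - 1)⁻¹ * ∑ j ∈ univ.erase i, ℓ0 (qhat1 q11 (θ j)))
        + (θ i).2 * (((n : ℝ) - 1)⁻¹ * ∑ j ∈ univ.erase i, ℓ1 (qhat1 q11 (θ j))))

/-- `θ` is a (Bayesian Nash) equilibrium of the peer-prediction mechanism: every agent plays
a valid strategy, and no agent can improve her expected payoff by a unilateral deviation. -/
def IsEquilibrium (n : ℕ) (q10 q11 : ℝ) (ℓ0 ℓ1 : ℝ → ℝ) (θ : Fin n → ℝ × ℝ) : Prop :=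
  (∀ i, ValidStrat (θ i)) ∧
  ∀ (i : Fin n) (s : ℝ × ℝ), ValidStrat s →
    payoff n q10 q11 ℓ0 ℓ1 θ i ≥ payoff n q10 q11 ℓ0 ℓ1 (Function.update θ i s) i

lemma payoff_eval {n : ℕ} (hn : 2 ≤ n) (q10 q11 : ℝ) (ℓ0 ℓ1 : ℝ → ℝ)
    (s : ℝ × ℝ) (θ : Fin n → ℝ × ℝ) (i : Fin n) (hθ : ∀ j, j ≠ i → θ j = s) :
    payoff n q10 q11 ℓ0 ℓ1 θ i =
      (1 - q10 / (1 - q11 + q10)) *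
        ((1 - (θ i).1) * ℓ0 (qhat0 q10 s) + (θ i).1 * ℓ1 (qhat0 q10 s))
      + (q10 / (1 - q11 + q10)) *
        ((1 - (θ i).2) * ℓ0 (qhat1 q11 s) + (θ i).2 * ℓ1 (qhat1 q11 s)) := by
  have hcard : (univ.erase i).card = n - 1 := by
    simp [Finset.card_erase_of_mem]
  have hne : ((n : ℝ) - 1) ≠ 0 := by
    have : (2 : ℝ) ≤ (n : ℝ) := by exact_mod_cast hn
    linarith
  have hcast : ((n - 1 : ℕ) : ℝ) = (n : ℝ) - 1 := by
    have h1 : 1 ≤ n := by omega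
    push_cast [Nat.cast_sub h1]
    ring
  have hsum : ∀ f : ℝ × ℝ → ℝ,
      ∑ j ∈ univ.erase i, f (θ j) = ((n : ℝ) - 1) * f s := by
    intro f
    rw [Finset.sum_congr rfl (fun j hj => by rw [hθ j (Finset.mem_erase.1 hj).1]),
        Finset.sum_const, hcard, nsmul_eq_mul, hcast]
  unfold payoff
  rw [hsum (fun p => ℓ0 (qhat0 q10 p)), hsum (fun p => ℓ1 (qhat0 q10 p)),
      hsum (fun p => ℓ0 (qhat1 q11 p)), hsum (fun p => ℓ1 (qhat1 q11 p)),
      inv_mul_cancel_left₀ hne, inv_mul_cancel_left₀ hne,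
      inv_mul_cancel_left₀ hne, inv_mul_cancel_left₀ hne]

lemma symm_equilibrium {n : ℕ} (hn : 2 ≤ n) {q10 q11 : ℝ}
    (hq10 : 0 < q10) (hcorr : q10 < q11) (hq11 : q11 < 1)
    {ℓ0 ℓ1 : ℝ → ℝ} (haff0 : IsAffineFn ℓ0) (haff1 : IsAffineFn ℓ1)
    (hproper0 : ℓ0 q10 > ℓ1 q10)
    {qs : ℝ} (hqs1 : q10 < qs) (hbe : ℓ0 qs = ℓ1 qs)
    (s : ℝ × ℝ) (hs : ValidStrat s)
    (h0 : (qhat0 q10 s ≤ qs ∧ s.1 = 0) ∨ qhat0 q10 s = qs ∨ (qs ≤ qhat0 q10 s ∧ s.1 = 1))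
    (h1 : (qhat1 q11 s ≤ qs ∧ s.2 = 0) ∨ qhat1 q11 s = qs ∨ (qs ≤ qhat1 q11 s ∧ s.2 = 1)) :
    IsEquilibrium n q10 q11 ℓ0 ℓ1 (fun _ => s) := by
  obtain ⟨a0, b0, ha0⟩ := haff0
  obtain ⟨a1, b1, ha1⟩ := haff1
  have hm : 0 < a1 - a0 := by
    rw [ha0, ha1] at hproper0 hbe
    nlinarith
  have hb1 : b1 = b0 + (a0 - a1) * qs := by
    rw [ha0, ha1] at hbe; linarith
  have hD : 0 < 1 - q11 + q10 := by linarith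
  have hQ0 : 0 < q10 / (1 - q11 + q10) := by positivity
  have hQ1 : q10 / (1 - q11 + q10) < 1 := by
    rw [div_lt_one hD]; linarith
  refine ⟨fun _ => hs, fun i t ht => ?_⟩
  rw [payoff_eval hn q10 q11 ℓ0 ℓ1 s _ i (fun j _ => rfl),
      payoff_eval hn q10 q11 ℓ0 ℓ1 s _ i (fun j hj => Function.update_of_ne hj _ _),
      Function.update_self]
  set Q := q10 / (1 - q11 + q10) with hQdef
  set x0 := qhat0 q10 s with hx0
  set x1 := qhat1 q11 s with hx1
  rw [ha0 x0, ha1 x0, ha0 x1, ha1 x1, hb1]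
  have k0 : 0 ≤ (s.1 - t.1) * (x0 - qs) := by
    rcases h0 with ⟨h, h'⟩ | h | ⟨h, h'⟩
    · rw [h']; nlinarith [ht.1.1]
    · rw [h]; ring_nf; nlinarith
    · rw [h']; nlinarith [ht.1.2]
  have k1 : 0 ≤ (s.2 - t.2) * (x1 - qs) := by
    rcases h1 with ⟨h, h'⟩ | h | ⟨h, h'⟩
    · rw [h']; nlinarith [ht.2.1]
    · rw [h]; ring_nf; nlinarith
    · rw [h']; nlinarith [ht.2.2]
  nlinarith [mul_nonneg (mul_nonneg (by linarith : (0:ℝ) ≤ 1 - Q) hm.le) k0,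
    mul_nonneg (mul_nonneg hQ0.le hm.le) k1]

/-- **Symmetric equilibria (Lemma 4.2).**  In the binary peer-prediction model with
break-even point `q*` (writing `q01 = 1 − q11`, `q00 = 1 − q10`):
(a) if `q01 ≤ q* ≤ q00`, then the nine listed symmetric profiles are all equilibria;
(b) if `q00 < q*`, then the seven listed symmetric profiles are all equilibria;
(c) if `q* < q01`, then the seven listed symmetric profiles are all equilibria. -/
theorem symmetric_equilibria_exist (n : ℕ) (hn : 2 ≤ n) (q10 q11 : ℝ)
    (hq10 : 0 < q10) (hcorr : q10 < q11) (hq11 : q11 < 1)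
    (ℓ0 ℓ1 : ℝ → ℝ) (haff0 : IsAffineFn ℓ0) (haff1 : IsAffineFn ℓ1)
    (hproper0 : ℓ0 q10 > ℓ1 q10) (hproper1 : ℓ1 q11 > ℓ0 q11)
    (qs : ℝ) (hqs : qs ∈ Set.Ioo q10 q11) (hbe : ℓ0 qs = ℓ1 qs) :
    (1 - q11 ≤ qs ∧ qs ≤ 1 - q10 →
      ∀ s ∈ ({(0, 0), (1, 1), (0, 1), (1, 0), (0, qs / q11), ((qs - q10) / (1 - q10), 1),
          (qs / (1 - q10), 0), (1, (qs - (1 - q11)) / q11), (qs, qs)} : Set (ℝ × ℝ)),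
        IsEquilibrium n q10 q11 ℓ0 ℓ1 (fun _ => s)) ∧
    (1 - q10 < qs →
      ∀ s ∈ ({(0, 0), (1, 1), (0, 1), (0, qs / q11), ((qs - q10) / (1 - q10), 1),
          (1, (qs - (1 - q11)) / q11), (qs, qs)} : Set (ℝ × ℝ)),
        IsEquilibrium n q10 q11 ℓ0 ℓ1 (fun _ => s)) ∧
    (qs < 1 - q11 →
      ∀ s ∈ ({(0, 0), (1, 1), (0, 1), (0, qs / q11), ((qs - q10) / (1 - q10), 1),
          (qs / (1 - q10), 0), (qs, qs)} : Set (ℝ × ℝ)),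
        IsEquilibrium n q10 q11 ℓ0 ℓ1 (fun _ => s)) := by
  obtain ⟨hqs1, hqs2⟩ := hqs
  have hqsp : 0 < qs := lt_trans hq10 hqs1
  have hqs1' : qs < 1 := lt_trans hqs2 hq11
  have h00 : 0 < 1 - q10 := by linarith
  have h01 : 0 < 1 - q11 := by linarith
  have hq11p : 0 < q11 := by linarith
  have key := fun s hs h0 h1 =>
    symm_equilibrium hn hq10 hcorr hq11 haff0 haff1 hproper0 hqs1 hbe s hs h0 h1
  have E1 : IsEquilibrium n q10 q11 ℓ0 ℓ1 (fun _ => ((0:ℝ), (0:ℝ))) := by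
    refine key _ ⟨?_, ?_⟩ (Or.inl ⟨?_, rfl⟩) (Or.inl ⟨?_, rfl⟩) <;>
      simp only [Set.mem_Icc, qhat0, qhat1]
    · constructor <;> norm_num
    · constructor <;> norm_num
    · nlinarith
    · nlinarith
  have E2 : IsEquilibrium n q10 q11 ℓ0 ℓ1 (fun _ => ((1:ℝ), (1:ℝ))) := by
    refine key _ ⟨?_, ?_⟩ (Or.inr (Or.inr ⟨?_, rfl⟩)) (Or.inr (Or.inr ⟨?_, rfl⟩)) <;>
      simp only [Set.mem_Icc, qhat0, qhat1]
    · constructor <;> norm_num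
    · constructor <;> norm_num
    · nlinarith
    · nlinarith
  have E3 : IsEquilibrium n q10 q11 ℓ0 ℓ1 (fun _ => ((0:ℝ), (1:ℝ))) := by
    refine key _ ⟨?_, ?_⟩ (Or.inl ⟨?_, rfl⟩) (Or.inr (Or.inr ⟨?_, rfl⟩)) <;>
      simp only [Set.mem_Icc, qhat0, qhat1]
    · constructor <;> norm_num
    · constructor <;> norm_num
    · nlinarith
    · nlinarith
  have E4 : 1 - q11 ≤ qs → qs ≤ 1 - q10 →
      IsEquilibrium n q10 q11 ℓ0 ℓ1 (fun _ => ((1:ℝ), (0:ℝ))) := by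
    intro ha hb
    refine key _ ⟨?_, ?_⟩ (Or.inr (Or.inr ⟨?_, rfl⟩)) (Or.inl ⟨?_, rfl⟩) <;>
      simp only [Set.mem_Icc, qhat0, qhat1]
    · constructor <;> norm_num
    · constructor <;> norm_num
    · nlinarith
    · nlinarith
  have E5 : IsEquilibrium n q10 q11 ℓ0 ℓ1 (fun _ => ((0:ℝ), qs / q11)) := by
    refine key _ ⟨?_, ?_⟩ (Or.inl ⟨?_, rfl⟩) (Or.inr (Or.inl ?_)) <;>
      simp only [Set.mem_Icc, qhat0, qhat1]
    · constructor <;> norm_num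
    · constructor
      · positivity
      · rw [div_le_one hq11p]; linarith
    · rw [← sub_nonneg]
      have h : qs - (0 * (1 - q10) + qs / q11 * q10) = qs * (q11 - q10) / q11 := by
        field_simp; ring
      rw [h]
      apply div_nonneg _ hq11p.le
      nlinarith
    · field_simp; ring
  have E6 : IsEquilibrium n q10 q11 ℓ0 ℓ1 (fun _ => ((qs - q10) / (1 - q10), (1:ℝ))) := by
    refine key _ ⟨?_, ?_⟩ (Or.inr (Or.inl ?_)) (Or.inr (Or.inr ⟨?_, rfl⟩)) <;>
      simp only [Set.mem_Icc, qhat0, qhat1]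
    · constructor
      · apply div_nonneg _ h00.le; linarith
      · rw [div_le_one h00]; linarith
    · constructor <;> norm_num
    · field_simp; ring
    · rw [← sub_nonneg]
      have h : (qs - q10) / (1 - q10) * (1 - q11) + 1 * q11 - qs
          = ((q11 - q10) * (1 - qs)) / (1 - q10) := by
        field_simp; ring
      rw [h]
      apply div_nonneg _ h00.le
      nlinarith
  have E7 : qs ≤ 1 - q10 →
      IsEquilibrium n q10 q11 ℓ0 ℓ1 (fun _ => (qs / (1 - q10), (0:ℝ))) := by
    intro hb
    refine key _ ⟨?_, ?_⟩ (Or.inr (Or.inl ?_)) (Or.inl ⟨?_, rfl⟩) <;>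
      simp only [Set.mem_Icc, qhat0, qhat1]
    · constructor
      · positivity
      · rw [div_le_one h00]; linarith
    · constructor <;> norm_num
    · field_simp; ring
    · rw [← sub_nonneg]
      have h : qs - (qs / (1 - q10) * (1 - q11) + 0 * q11) = qs * (q11 - q10) / (1 - q10) := by
        field_simp; ring
      rw [h]
      apply div_nonneg _ h00.le
      nlinarith
  have E8 : 1 - q11 ≤ qs →
      IsEquilibrium n q10 q11 ℓ0 ℓ1 (fun _ => ((1:ℝ), (qs - (1 - q11)) / q11)) := by
    intro ha
    refine key _ ⟨?_, ?_⟩ (Or.inr (Or.inr ⟨?_, rfl⟩)) (Or.inr (Or.inl ?_)) <;>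
      simp only [Set.mem_Icc, qhat0, qhat1]
    · constructor <;> norm_num
    · constructor
      · apply div_nonneg _ hq11p.le; linarith
      · rw [div_le_one hq11p]; linarith
    · have h : 1 * (1 - q10) + (qs - (1 - q11)) / q11 * q10 - qs
          = ((q11 - q10) * (1 - qs)) / q11 := by
        field_simp; ring
      have h2 : (0:ℝ) ≤ ((q11 - q10) * (1 - qs)) / q11 :=
        div_nonneg (by nlinarith) hq11p.le
      linarith [h ▸ h2]
    · field_simp; ring
  have E9 : IsEquilibrium n q10 q11 ℓ0 ℓ1 (fun _ => (qs, qs)) := by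
    refine key _ ⟨?_, ?_⟩ (Or.inr (Or.inl ?_)) (Or.inr (Or.inl ?_)) <;>
      simp only [Set.mem_Icc, qhat0, qhat1]
    · exact ⟨hqsp.le, hqs1'.le⟩
    · exact ⟨hqsp.le, hqs1'.le⟩
    · ring
    · ring
  refine ⟨fun hc s hs => ?_, fun hc s hs => ?_, fun hc s hs => ?_⟩ <;>
    simp only [Set.mem_insert_iff, Set.mem_singleton_iff] at hs
  · rcases hs with rfl|rfl|rfl|rfl|rfl|rfl|rfl|rfl|rfl
    exacts [E1, E2, E3, E4 hc.1 hc.2, E5, E6, E7 hc.2, E8 hc.1, E9]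
  · rcases hs with rfl|rfl|rfl|rfl|rfl|rfl|rfl
    exacts [E1, E2, E3, E5, E6, E8 (by linarith), E9]
  · rcases hs with rfl|rfl|rfl|rfl|rfl|rfl|rfl
    exacts [E1, E2, E3, E5, E6, E7 (by linarith), E9]
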